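/- Let H = ℝⁿ, let S : ℝⁿ × ℝ^m → ℝ be convex and continuous, let h : ℝⁿ → ℝ be convex and continuously differentiable, and fix λ > 0. Let x̄ ∈ ℝⁿ satisfy S(x̄, 0) < h(x̄). Then there exist constants C_λ > 0 and ε > 0 such that for every x ∈ B_ε(x̄) and every z ∈ ℝ^m, if p ∈ ℝⁿ × ℝ^m is the (unique) minimizer of u ↦ S(u) + ‖(x,z) − u‖²/(2λ), then (1/λ)·‖(x,z) − p‖ + ‖∇h(x)‖ ≤ C_λ·(‖z‖ + 1). In particular the gradient of the Moreau envelope M_λS satisfies ‖∇_x M_λS(x,z) − ∇h(x)‖ ≤ C_λ·(‖z‖ + 1) for all such (x,z). (Lemma 4.1 / growth condition for the regularized gradients.) -/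

import Mathlib

set_option maxHeartbeats 1000000


open Filter Topology


lemma aux_minorant {V : Type*} [NormedAddCommGroup V] [NormedSpace ℝ V] [ProperSpace V]
    (F : V → ℝ) (hconv : ConvexOn ℝ Set.univ F) (hcont : Continuous F) (w₀ : V) :
    ∃ b : ℝ, 0 ≤ b ∧ ∀ u, F w₀ - b * ‖u - w₀‖ ≤ F u := by
  obtain ⟨M, hM⟩ := (isCompact_closedBall w₀ 1).exists_bound_of_continuousOn hcont.continuousOn
  refine ⟨max (M - F w₀) 0, le_max_right _ _, fun u => ?_⟩
  rcases eq_or_ne u w₀ with rfl | hne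
  · simp
  have ht : (0:ℝ) < ‖u - w₀‖ := by rw [norm_pos_iff, sub_ne_zero]; exact hne
  set t := ‖u - w₀‖ with htdef
  have h1t : (0:ℝ) < 1 + t := by linarith
  set μ := (1 + t)⁻¹ with hμdef
  have hμ : μ * (1 + t) = 1 := inv_mul_cancel₀ h1t.ne'
  have hμ0 : 0 < μ := inv_pos.mpr h1t
  set v := w₀ - t⁻¹ • (u - w₀) with hv
  have hvball : v ∈ Metric.closedBall w₀ 1 := by
    rw [Metric.mem_closedBall, dist_eq_norm, hv]
    simp only [sub_sub_cancel_left, norm_neg, norm_smul, norm_inv, Real.norm_eq_abs]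
    rw [abs_of_pos ht, ← htdef, inv_mul_cancel₀ ht.ne']
  have hMv : F v ≤ M := (le_abs_self _).trans (Real.norm_eq_abs (F v) ▸ hM v hvball)
  have hcomb : (t * μ) • v + μ • u = w₀ := by
    rw [hv]
    match_scalars <;> (simp only [hμdef]; field_simp; try ring)
  have hab : t * μ + μ = 1 := by simp only [hμdef]; field_simp; ring
  have hF := hconv.2 (Set.mem_univ v) (Set.mem_univ u) (mul_nonneg ht.le hμ0.le) hμ0.le hab
  rw [hcomb] at hF
  simp only [smul_eq_mul] at hF
  have key := mul_le_mul_of_nonneg_left hF h1t.le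
  have key2 : (1 + t) * F w₀ ≤ t * F v + F u := by
    calc (1 + t) * F w₀ ≤ (1 + t) * (t * μ * F v + μ * F u) := key
      _ = (μ * (1 + t)) * (t * F v + F u) := by ring
      _ = t * F v + F u := by rw [hμ, one_mul]
  have hb1 : M - F w₀ ≤ max (M - F w₀) 0 := le_max_left _ _
  nlinarith [key2, mul_le_mul_of_nonneg_left hb1 ht.le, mul_le_mul_of_nonneg_left hMv ht.le]

/-- Lemma 4.1 (growth condition for the regularized gradients): let `S : ℝⁿ × ℝ^m → ℝ` be
convex and continuous, `h : ℝⁿ → ℝ` convex and `C¹`, `λ > 0`, and `x̄` a point with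
`S(x̄,0) < h(x̄)`.  Then there are `C_λ > 0` and `ε > 0` such that for every
`x ∈ B_ε(x̄)` and every `z`, if `p` is the minimizer of
`u ↦ S(u) + ‖(x,z) − u‖²/(2λ)` (i.e. `p = prox_{λS}(x,z)`), then
`(1/λ)·‖(x,z) − p‖ + ‖∇h(x)‖ ≤ C_λ·(‖z‖ + 1)`, which is exactly the asserted bound
`‖∇_x M_λS(x,z) − ∇h(x)‖ ≤ C_λ (‖z‖+1)` since `∇M_λS(x,z) = ((x,z) − p)/λ`. -/
theorem stmt10 {n m : ℕ}
    (S : EuclideanSpace ℝ (Fin n) → EuclideanSpace ℝ (Fin m) → ℝ)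
    (hSconv : ConvexOn ℝ Set.univ
      fun q : EuclideanSpace ℝ (Fin n) × EuclideanSpace ℝ (Fin m) => S q.1 q.2)
    (hScont : Continuous
      fun q : EuclideanSpace ℝ (Fin n) × EuclideanSpace ℝ (Fin m) => S q.1 q.2)
    (h : EuclideanSpace ℝ (Fin n) → ℝ) (hconv : ConvexOn ℝ Set.univ h)
    (hC1 : ContDiff ℝ 1 h)
    (lam : ℝ) (hlam : 0 < lam)
    (xbar : EuclideanSpace ℝ (Fin n)) (hxbar : S xbar 0 < h xbar) :
    ∃ Cl > (0 : ℝ), ∃ ε > (0 : ℝ),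
      ∀ x ∈ Metric.closedBall xbar ε, ∀ z : EuclideanSpace ℝ (Fin m),
        ∀ p : EuclideanSpace ℝ (Fin n) × EuclideanSpace ℝ (Fin m),
          IsMinOn (fun u : EuclideanSpace ℝ (Fin n) × EuclideanSpace ℝ (Fin m) =>
              S u.1 u.2 + (‖x - u.1‖ ^ 2 + ‖z - u.2‖ ^ 2) / (2 * lam)) Set.univ p →
          (1 / lam) * Real.sqrt (‖x - p.1‖ ^ 2 + ‖z - p.2‖ ^ 2) + ‖gradient h x‖
            ≤ Cl * (‖z‖ + 1) := by
    -- work in the ℓ² product space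
  set E2 := WithLp 2 (EuclideanSpace ℝ (Fin n) × EuclideanSpace ℝ (Fin m)) with hE2
  set e := WithLp.equiv 2 (EuclideanSpace ℝ (Fin n) × EuclideanSpace ℝ (Fin m)) with he
  set F : E2 → ℝ := fun u => S u.fst u.snd with hF
  have hFconv : ConvexOn ℝ Set.univ F := by
    have := hSconv.comp_linearMap (WithLp.linearEquiv 2 ℝ (EuclideanSpace ℝ (Fin n) × EuclideanSpace ℝ (Fin m))).toLinearMap
    rw [Set.preimage_univ] at this
    exact this
  have hFcont : Continuous F := hScont.comp (WithLp.prod_continuous_ofLp _ _ _)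
  set w₀ : E2 := e.symm (xbar, 0) with hw₀
  obtain ⟨b, hb0, hbd⟩ := aux_minorant F hFconv hFcont w₀
  obtain ⟨A, hA⟩ := (isCompact_closedBall xbar 1).exists_bound_of_continuousOn
    (Continuous.continuousOn (hScont.comp (continuous_id.prodMk continuous_const)) :
      ContinuousOn (fun x => S x 0) _)
  have hgc : Continuous (gradient h) := by
    unfold gradient
    exact (LinearIsometryEquiv.continuous _).comp (hC1.continuous_fderiv one_ne_zero)
  obtain ⟨G, hG⟩ := (isCompact_closedBall xbar 1).exists_bound_of_continuousOn
    hgc.continuousOn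
  have hG0 : 0 ≤ G := (norm_nonneg (gradient h xbar)).trans (hG xbar (Metric.mem_closedBall_self zero_le_one))
  have hA0 : 0 ≤ A := (norm_nonneg _).trans (hA xbar (Metric.mem_closedBall_self zero_le_one))
  set a := S xbar 0 with ha
  have hFw₀ : F w₀ = a := rfl
  set K := A + |a| + b with hK
  have hK0 : 0 ≤ K := by positivity
  have h2lK : (0:ℝ) ≤ 2 * lam * K := by positivity
  set r := Real.sqrt (2 * lam * K) with hr
  have hr0 : 0 ≤ r := Real.sqrt_nonneg _
  have hrsq : r ^ 2 = 2 * lam * K := Real.sq_sqrt h2lK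
  have h1l : (0:ℝ) < 1 / lam := by positivity
  have hrl0 : 0 ≤ r / lam := by positivity
  refine ⟨1 / lam + 2 * b + r / lam + G + 1, by linarith, 1, one_pos, ?_⟩
  intro x hx z p hmin
  set w : E2 := e.symm (x, z) with hw
  set p' : E2 := e.symm p with hp'
  set t := ‖w - p'‖ with htd
  have ht0 : 0 ≤ t := norm_nonneg _
  have ht2 : t ^ 2 = ‖x - p.1‖ ^ 2 + ‖z - p.2‖ ^ 2 := by
    rw [htd, WithLp.prod_norm_sq_eq_of_L2]; rfl
  -- minimality at (x,0)
  have h1 := isMinOn_iff.mp hmin (x, 0) (Set.mem_univ _)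
  simp only [sub_self, norm_zero, sub_zero] at h1
  norm_num at h1
  have h2l : (0:ℝ) < 2 * lam := by linarith
  have e1' : (‖x - p.1‖ ^ 2 + ‖z - p.2‖ ^ 2) - ‖z‖ ^ 2 ≤ (S x 0 - S p.1 p.2) * (2 * lam) := by
    have hstep : ((‖x - p.1‖ ^ 2 + ‖z - p.2‖ ^ 2) - ‖z‖ ^ 2) / (2 * lam)
        ≤ S x 0 - S p.1 p.2 := by
      rw [sub_div]; push_cast at h1 ⊢; linarith
    exact (div_le_iff₀ h2l).mp hstep
  have h2 : a - b * ‖p' - w₀‖ ≤ S p.1 p.2 := hbd p'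
  have h3 : ‖p' - w₀‖ ≤ t + ‖w - w₀‖ := by
    calc ‖p' - w₀‖ = dist p' w₀ := (dist_eq_norm _ _).symm
      _ ≤ dist p' w + dist w w₀ := dist_triangle _ _ _
      _ = t + ‖w - w₀‖ := by rw [dist_comm p' w, dist_eq_norm, dist_eq_norm]
  have hww₀ : ‖w - w₀‖ ^ 2 = ‖x - xbar‖ ^ 2 + ‖z‖ ^ 2 := by
    rw [WithLp.prod_norm_sq_eq_of_L2]
    show ‖x - xbar‖ ^ 2 + ‖z - 0‖ ^ 2 = _
    rw [sub_zero]
  have hxd : ‖x - xbar‖ ≤ 1 := by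
    rw [← dist_eq_norm]; exact hx
  have h4 : ‖w - w₀‖ ≤ 1 + ‖z‖ := by
    nlinarith [norm_nonneg (w - w₀), norm_nonneg z, norm_nonneg (x - xbar)]
  have h5 : S x 0 ≤ A := (le_abs_self _).trans (Real.norm_eq_abs (S x 0) ▸ hA x hx)
  have hbp : b * ‖p' - w₀‖ ≤ b * (t + 1 + ‖z‖) := by
    apply mul_le_mul_of_nonneg_left _ hb0
    linarith
  have key : t ^ 2 ≤ 2 * lam * K + 2 * lam * b * t + 2 * lam * b * ‖z‖ + ‖z‖ ^ 2 := by
    have hSp : a - b * (t + 1 + ‖z‖) ≤ S p.1 p.2 := by linarith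
    have hmul := mul_le_mul_of_nonneg_right (sub_le_sub h5 hSp) h2l.le
    have habs2 := mul_le_mul_of_nonneg_left (neg_abs_le a) h2l.le
    nlinarith [e1', hmul, habs2]
  have tb : t ≤ ‖z‖ + 2 * lam * b + r := by
    by_contra hcon
    push_neg at hcon
    have hB0 : (0:ℝ) ≤ 2 * lam * b := mul_nonneg (by linarith) hb0
    have ht0' : 0 < t := by linarith [norm_nonneg z, hr0]
    nlinarith [key, hrsq, mul_lt_mul_of_pos_left hcon ht0',
      mul_le_mul_of_nonneg_left hcon.le (norm_nonneg z),
      mul_le_mul_of_nonneg_left hcon.le hr0,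
      mul_nonneg hr0 (norm_nonneg z), mul_nonneg hr0 hB0,
      mul_nonneg (norm_nonneg z) hB0]
  have hs : Real.sqrt (‖x - p.1‖ ^ 2 + ‖z - p.2‖ ^ 2) = t := by
    rw [← ht2, Real.sqrt_sq ht0]
  rw [hs]
  have hGx : ‖gradient h x‖ ≤ G := hG x hx
  have e2 : (1 / lam) * t ≤ (1 / lam) * ‖z‖ + 2 * b + r / lam := by
    have e3 : (1 / lam) * (‖z‖ + 2 * lam * b + r) = (1 / lam) * ‖z‖ + 2 * b + r / lam := by
      field_simp
    have := mul_le_mul_of_nonneg_left tb h1l.le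
    linarith
  have hClz : (1 / lam) * ‖z‖ ≤ (1 / lam + 2 * b + r / lam + G + 1) * ‖z‖ :=
    mul_le_mul_of_nonneg_right (by linarith) (norm_nonneg z)
  have hExp : (1 / lam + 2 * b + r / lam + G + 1) * (‖z‖ + 1)
      = (1 / lam + 2 * b + r / lam + G + 1) * ‖z‖ + (1 / lam + 2 * b + r / lam + G + 1) := by
    ring
  rw [hExp]
  linarith
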